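/- If N is a semi-regular flat R-module and F is a flat R-module, then N ⊗_R F is semi-regular flat. -/

import Mathlib

open CategoryTheory

noncomputable section

/-- An ideal is semi-regular if it contains a finitely generated subideal
with zero annihilator. -/
def Ideal.IsSemiregular {R : Type} [CommRing R] (I : Ideal R) : Prop :=
  ∃ J : Ideal R, J ≤ I ∧ J.FG ∧ Submodule.annihilator J = ⊥

/-- A module is semi-regular flat if `Tor₁(R/I, M) = 0` for every finitely generated
semi-regular ideal `I`. -/
def IsSemiregularFlat (R : Type) [CommRing R] (M : Type) [AddCommGroup M] [Module R M] : Prop :=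
  ∀ I : Ideal R, I.FG → I.IsSemiregular →
    Limits.IsZero (((Tor (ModuleCat R) 1).obj (ModuleCat.of R (R ⧸ I))).obj (ModuleCat.of R M))

section Aux
open TensorProduct LinearMap
section
variable {R : Type} [CommRing R] (I : Ideal R)
variable {A B : Type} [AddCommGroup A] [Module R A] [AddCommGroup B] [Module R B]

/-- The action map `I ⊗ A → A`. -/
noncomputable def jmap : I ⊗[R] A →ₗ[R] A :=
  (TensorProduct.lid R A).toLinearMap ∘ₗ rTensor A I.subtype

/-- The map `A → (R⧸I) ⊗ A`, `a ↦ 1 ⊗ a`. -/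
noncomputable def mmap : A →ₗ[R] (R ⧸ I) ⊗[R] A :=
  TensorProduct.mk R (R ⧸ I) A 1

lemma jmap_tmul (i : I) (a : A) : jmap I (i ⊗ₜ a) = (i : R) • a := rfl

lemma jmap_naturality (f : A →ₗ[R] B) :
    jmap I ∘ₗ lTensor I f = f ∘ₗ jmap I := by
  ext i a
  simp [jmap, map_smul]

lemma mmap_naturality (f : A →ₗ[R] B) :
    mmap I ∘ₗ f = lTensor (R ⧸ I) f ∘ₗ mmap I := rfl

lemma mmap_surjective : Function.Surjective (mmap I (A := A)) := by
  intro x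
  induction x using TensorProduct.induction_on with
  | zero => exact ⟨0, map_zero _⟩
  | tmul r a =>
    obtain ⟨r, rfl⟩ := Ideal.Quotient.mk_surjective r
    refine ⟨r • a, ?_⟩
    have : (Ideal.Quotient.mk I r) ⊗ₜ[R] a = r • ((1 : R ⧸ I) ⊗ₜ[R] a) := by
      rw [TensorProduct.smul_tmul']
      congr 1
      rw [← Ideal.Quotient.algebraMap_eq, Algebra.algebraMap_eq_smul_one]
    simp [mmap, this]
  | add x y hx hy =>
    obtain ⟨a, rfl⟩ := hx; obtain ⟨b, rfl⟩ := hy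
    exact ⟨a + b, map_add _ _ _⟩

lemma jmap_injective [Module.Flat R A] : Function.Injective (jmap I (A := A)) := by
  exact (TensorProduct.lid R A).injective.comp
    (Module.Flat.rTensor_preserves_injective_linearMap _ I.injective_subtype)

lemma exact_jmap_mmap : Function.Exact (jmap I (A := A)) (mmap I (A := A)) := by
  have h0 : Function.Exact I.subtype I.mkQ := LinearMap.exact_subtype_mkQ I
  have h1 : Function.Exact (rTensor A I.subtype) (rTensor A I.mkQ) :=
    rTensor_exact A h0 (Submodule.mkQ_surjective I)
  have key : ∀ a : A, mmap I a = rTensor A I.mkQ ((TensorProduct.lid R A).symm a) := by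
    intro a; rfl
  intro a
  rw [key]
  constructor
  · intro h
    obtain ⟨t, ht⟩ := (h1 _).1 h
    exact ⟨t, by
      have := congrArg (TensorProduct.lid R A) ht
      simpa [jmap] using this⟩
  · rintro ⟨t, rfl⟩
    apply (h1 _).2
    exact ⟨t, by simp [jmap]⟩
end


section claim2
variable {R : Type} [CommRing R] (I : Ideal R)
variable {Q₀ M : Type} [AddCommGroup Q₀] [Module R Q₀] [AddCommGroup M] [Module R M]
variable [Module.Flat R Q₀] (ε : Q₀ →ₗ[R] M)

lemma claim2 (hs : Function.Surjective ε) :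
    Function.Injective (lTensor (R ⧸ I) (ker ε).subtype) ↔
      Function.Injective (jmap I (A := M)) := by
  set K := ker ε with hK
  set ι : K →ₗ[R] Q₀ := (ker ε).subtype with hι
  have hexact : Function.Exact ι ε := by
    intro x
    constructor
    · intro hx; exact ⟨⟨x, hx⟩, rfl⟩
    · rintro ⟨y, rfl⟩; exact y.2
  have hIexact : Function.Exact (lTensor I ι) (lTensor I ε) :=
    lTensor_exact I hexact hs
  have hb : Function.Surjective (lTensor I ε) := LinearMap.lTensor_surjective I hs
  have hjQ : Function.Injective (jmap I (A := Q₀)) := jmap_injective I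
  have natj : ∀ (s : I ⊗[R] Q₀), jmap I (lTensor I ε s) = ε (jmap I s) :=
    fun s => congrFun (congrArg DFunLike.coe (jmap_naturality I ε)) s
  have natjK : ∀ (r : I ⊗[R] K), jmap I (lTensor I ι r) = ι (jmap I r) :=
    fun s => congrFun (congrArg DFunLike.coe (jmap_naturality I ι)) s
  have natmK : ∀ (k : K), lTensor (R ⧸ I) ι (mmap I k) = mmap I (ι k) :=
    fun k => (congrFun (congrArg DFunLike.coe (mmap_naturality I ι)) k).symm
  constructor
  · intro hinj
    rw [injective_iff_map_eq_zero]
    intro t ht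
    obtain ⟨s, rfl⟩ := hb t
    have hk : jmap I s ∈ K := by
      rw [hK, LinearMap.mem_ker, ← natj s, ht]
    set k : K := ⟨jmap I s, hk⟩ with hkdef
    have h1 : lTensor (R ⧸ I) ι (mmap I k) = 0 := by
      rw [natmK]
      exact (exact_jmap_mmap I).apply_apply_eq_zero s
    have h2 : mmap I k = 0 := by
      apply hinj; rw [h1, map_zero]
    obtain ⟨r, hr⟩ := (exact_jmap_mmap I k).1 h2
    have h3 : lTensor I ι r = s := by
      apply hjQ
      rw [natjK, hr]
      rfl
    rw [← h3, ← LinearMap.comp_apply, ← lTensor_comp]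
    have : ε ∘ₗ ι = 0 := by ext ⟨x, hx⟩; exact hx
    rw [this, lTensor_zero, LinearMap.zero_apply]
  · intro hinj
    rw [injective_iff_map_eq_zero]
    intro x hx
    obtain ⟨k, rfl⟩ := mmap_surjective I x
    have h1 : mmap I (ι k) = 0 := by rw [← natmK, hx]
    obtain ⟨s, hs'⟩ := (exact_jmap_mmap I (ι k)).1 h1
    have h2 : jmap I (lTensor I ε s) = 0 := by
      rw [natj, hs']
      exact k.2
    have h3 : lTensor I ε s = 0 := by apply hinj; rw [h2, map_zero]
    obtain ⟨r, hr⟩ := (hIexact s).1 h3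
    have h4 : jmap I r = k := by
      apply (ker ε).injective_subtype
      have h5 := natjK r
      rw [hr, hs'] at h5
      exact h5.symm
    rw [← h4]
    exact (exact_jmap_mmap I).apply_apply_eq_zero r

end claim2

section claim1
variable {R : Type} [CommRing R] (I : Ideal R)
variable {Q₂ Q₁ Q₀ : Type} [AddCommGroup Q₂] [Module R Q₂] [AddCommGroup Q₁] [Module R Q₁]
  [AddCommGroup Q₀] [Module R Q₀]
variable (d₂ : Q₂ →ₗ[R] Q₁) (d₁ : Q₁ →ₗ[R] Q₀)

lemma claim1 (h21 : Function.Exact d₂ d₁) :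
    Function.Exact (lTensor (R ⧸ I) d₂) (lTensor (R ⧸ I) d₁) ↔
      Function.Injective (lTensor (R ⧸ I) (range d₁).subtype) := by
  set X := R ⧸ I
  set π : Q₁ →ₗ[R] range d₁ := d₁.rangeRestrict with hπ
  have hfac : d₁ = (range d₁).subtype ∘ₗ π := by ext x; rfl
  have hexactπ : Function.Exact d₂ π := by
    rw [LinearMap.exact_iff] at h21 ⊢
    rw [LinearMap.ker_rangeRestrict, h21]
  have hπbar : Function.Surjective (lTensor X π) :=
    LinearMap.lTensor_surjective X (LinearMap.surjective_rangeRestrict d₁)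
  have hexactbar : Function.Exact (lTensor X d₂) (lTensor X π) :=
    lTensor_exact X hexactπ (LinearMap.surjective_rangeRestrict d₁)
  rw [LinearMap.exact_iff] at hexactbar
  rw [LinearMap.exact_iff, ← LinearMap.ker_eq_bot]
  have hd1bar : lTensor X d₁ = lTensor X (range d₁).subtype ∘ₗ lTensor X π := by
    rw [← lTensor_comp, ← hfac]
  rw [hd1bar, LinearMap.ker_comp, ← hexactbar]
  have h := (Submodule.comap_injective_of_surjective hπbar).eq_iff
    (a := ker (lTensor X (range d₁).subtype)) (b := ⊥)
  rw [Submodule.comap_bot] at h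
  exact h
end claim1

section bridge
open CategoryTheory Limits
variable {R : Type} [CommRing R] (I : Ideal R)

lemma jmap_inj_equiv {A B : Type} [AddCommGroup A] [Module R A] [AddCommGroup B] [Module R B]
    (e : A ≃ₗ[R] B) :
    Function.Injective (jmap I (A := A)) ↔ Function.Injective (jmap I (A := B)) := by
  have nat : ∀ t, jmap I (lTensor I e.toLinearMap t) = e (jmap I t) :=
    fun t => congrFun (congrArg DFunLike.coe (jmap_naturality I e.toLinearMap)) t
  constructor
  · intro h t₁ t₂ ht
    have := (LinearEquiv.lTensor I e).surjective
    obtain ⟨s₁, rfl⟩ := this t₁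
    obtain ⟨s₂, rfl⟩ := this t₂
    have e1 : ∀ s, (LinearEquiv.lTensor I e) s = lTensor I e.toLinearMap s := fun _ => rfl
    rw [e1, e1] at ht ⊢
    rw [nat, nat] at ht
    rw [h (e.injective ht)]
  · intro h t₁ t₂ ht
    apply (LinearEquiv.lTensor I e).injective
    apply h
    have e1 : ∀ s, (LinearEquiv.lTensor I e) s = lTensor I e.toLinearMap s := fun _ => rfl
    rw [e1, e1, nat, nat, ht]

lemma claim12 {Q₂ Q₁ Q₀ M : Type} [AddCommGroup Q₂] [Module R Q₂] [AddCommGroup Q₁] [Module R Q₁]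
    [AddCommGroup Q₀] [Module R Q₀] [AddCommGroup M] [Module R M] [Module.Flat R Q₀]
    (d₂ : Q₂ →ₗ[R] Q₁) (d₁ : Q₁ →ₗ[R] Q₀) (ε : Q₀ →ₗ[R] M)
    (h21 : Function.Exact d₂ d₁) (h10 : Function.Exact d₁ ε) (hs : Function.Surjective ε) :
    (Function.Exact (lTensor (R ⧸ I) d₂) (lTensor (R ⧸ I) d₁)) ↔
      Function.Injective (jmap I (A := M)) := by
  rw [claim1 I d₂ d₁ h21]
  rw [show range d₁ = ker ε from (LinearMap.exact_iff.1 h10).symm]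
  exact claim2 I ε hs

lemma isZero_tor_iff (M : Type) [AddCommGroup M] [Module R M] :
    IsZero (((Tor (ModuleCat R) 1).obj (ModuleCat.of R (R ⧸ I))).obj (ModuleCat.of R M)) ↔
      Function.Injective (jmap I (A := M)) := by
  obtain ⟨P⟩ := (HasProjectiveResolution.out (Z := ModuleCat.of R M))
  let F := (MonoidalCategory.tensoringLeft (ModuleCat R)).obj (ModuleCat.of R (R ⧸ I))
  have e : (((Tor (ModuleCat R) 1).obj (ModuleCat.of R (R ⧸ I))).obj (ModuleCat.of R M)) ≅
      ((F.mapHomologicalComplex _).obj P.complex).homology 1 :=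
    P.isoLeftDerivedObj F 1
  rw [e.isZero_iff, ← HomologicalComplex.exactAt_iff_isZero_homology,
    HomologicalComplex.exactAt_iff' _ 2 1 0 (by simp) (by simp),
    ShortComplex.ShortExact.moduleCat_exact_iff_function_exact]
  show Function.Exact
      (lTensor (R ⧸ I) ((P.complex.d 2 1).hom : P.complex.X 2 →ₗ[R] P.complex.X 1))
      (lTensor (R ⧸ I) ((P.complex.d 1 0).hom : P.complex.X 1 →ₗ[R] P.complex.X 0)) ↔ _
  haveI : Module.Projective R (P.complex.X 0) :=
    (IsProjective.iff_projective _).mpr (P.projective 0)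
  have h21 : Function.Exact
      ((P.complex.d 2 1).hom : P.complex.X 2 →ₗ[R] P.complex.X 1)
      ((P.complex.d 1 0).hom : P.complex.X 1 →ₗ[R] P.complex.X 0) :=
    (ShortComplex.ShortExact.moduleCat_exact_iff_function_exact _).1 (P.exact_succ 0)
  have hS : (ShortComplex.mk (P.complex.d 1 0) (P.π.f 0) P.complex_d_comp_π_f_zero).Exact :=
    ShortComplex.exact_of_g_is_cokernel _ P.isColimitCokernelCofork
  have h10 : Function.Exact
      ((P.complex.d 1 0).hom : P.complex.X 1 →ₗ[R] P.complex.X 0)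
      ((P.π.f 0).hom : P.complex.X 0 →ₗ[R] M) :=
    (ShortComplex.ShortExact.moduleCat_exact_iff_function_exact _).1 hS
  have hs : Function.Surjective ((P.π.f 0).hom : P.complex.X 0 →ₗ[R] M) :=
    (ModuleCat.epi_iff_surjective _).1 inferInstance
  exact claim12 I _ _ _ h21 h10 hs

end bridge

end Aux

open TensorProduct LinearMap in
/-- If `N` is semi-regular flat and `F` is flat, then `N ⊗ F` is semi-regular flat. -/
theorem isSemiregularFlat_tensor (R : Type) [CommRing R]
    (N : Type) [AddCommGroup N] [Module R N]
    (F : Type) [AddCommGroup F] [Module R F] [Module.Flat R F]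
    (hN : IsSemiregularFlat R N) :
    IsSemiregularFlat R (TensorProduct R N F) := by
  intro I hfg hsr
  rw [isZero_tor_iff I (TensorProduct R N F)]
  have h1 : Function.Injective (jmap I (A := N)) := (isZero_tor_iff I N).1 (hN I hfg hsr)
  have hrN : Function.Injective (rTensor N I.subtype) := by
    intro a b hab
    apply h1
    show (TensorProduct.lid R N) (rTensor N I.subtype a) = (TensorProduct.lid R N) (rTensor N I.subtype b)
    rw [hab]
  have h2 : Function.Injective (rTensor F (rTensor N I.subtype)) :=
    Module.Flat.rTensor_preserves_injective_linearMap _ hrN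
  have hcomm : (rTensor (TensorProduct R N F) I.subtype) ∘ₗ
        (TensorProduct.assoc R I N F).toLinearMap
      = (TensorProduct.assoc R R N F).toLinearMap ∘ₗ (rTensor F (rTensor N I.subtype)) := by
    apply TensorProduct.ext_threefold
    intro a b c
    rfl
  have hrNF : Function.Injective (rTensor (TensorProduct R N F) I.subtype) := by
    intro x y hxy
    obtain ⟨x', rfl⟩ := (TensorProduct.assoc R I N F).surjective x
    obtain ⟨y', rfl⟩ := (TensorProduct.assoc R I N F).surjective y
    have hpt := fun t => congrFun (congrArg DFunLike.coe hcomm) t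
    simp only [LinearMap.comp_apply, LinearEquiv.coe_coe] at hpt
    rw [hpt, hpt] at hxy
    exact congrArg _ (h2 ((TensorProduct.assoc R R N F).injective hxy))
  intro a b hab
  apply hrNF
  apply (TensorProduct.lid R (TensorProduct R N F)).injective
  exact hab

end
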